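/- Let q be a prime power, m a positive integer dividing q^n − 1, and V a k-dimensional 𝔽_q-subspace of 𝔽_{q^n} with subspace polynomial L_V(X) = X^{q^k} + Σ_{j=0}^{i} a_j X^{q^j}. Suppose a_s ≠ 0 for some s ∈ {1, …, i}, and set t := gcd(s, n). If α, β ∈ 𝔽_{q^n}^* satisfy α^m V = β^m V, then (α/β)^m lies in the subfield 𝔽_{q^t} of 𝔽_{q^n}, i.e., ((α/β)^m)^{q^t} = (α/β)^m. -/

import Mathlib

open Polynomial

/-- The `m`-quasi cyclic shift of a subspace `V` by `a`: `a • V = {a * v : v ∈ V}`. -/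
noncomputable def qshift {K F : Type*} [Field K] [Field F] [Algebra K F]
    (a : F) (V : Submodule K F) : Submodule K F :=
  V.map (LinearMap.mulLeft K a)

/-- The subspace polynomial `L_V(X) = ∏_{v ∈ V} (X - v)` of a subspace `V` of a
finite field. -/
noncomputable def subspacePoly {K F : Type*} [Field K] [Field F] [Algebra K F] [Fintype F]
    (V : Submodule K F) : F[X] :=
  ∏ v ∈ (Set.toFinite (V : Set F)).toFinset, (X - C v)

/-- The subspace distance `d(U,V) = dim U + dim V - 2 dim (U ⊓ V)`. -/
noncomputable def subspaceDist {K F : Type*} [Field K] [Field F] [Algebra K F]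
    (U V : Submodule K F) : ℕ :=
  Module.finrank K U + Module.finrank K V - 2 * Module.finrank K ↥(U ⊓ V)

section Aux

variable {F : Type*} [Field F] [Fintype F]

lemma aux_coprime {q n : ℕ} (hq : 1 < q) (hn : 0 < n) : Nat.Coprime q (q ^ n - 1) := by
  have h1 : Nat.gcd q (q ^ n - 1) ∣ q ^ n := (Nat.gcd_dvd_left _ _).trans (dvd_pow_self q hn.ne')
  have h2 := Nat.gcd_dvd_right q (q ^ n - 1)
  have h3 := Nat.dvd_sub h1 h2
  have hqn : 1 ≤ q ^ n := Nat.one_le_pow _ _ (by omega)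
  rw [Nat.sub_sub_self hqn] at h3
  exact Nat.eq_one_of_dvd_one h3

lemma aux_pow_inj {q n : ℕ} (hq : 1 < q) (hn : 0 < n) (hcard : Fintype.card F = q ^ n)
    (c : ℕ) : Function.Injective (fun x : F => x ^ q ^ c) := by
  have hcop : Nat.Coprime (q ^ c) (q ^ n - 1) := (aux_coprime hq hn).pow_left c
  have he : q ^ c ≠ 0 := pow_ne_zero c (by omega)
  intro x y h
  simp only at h
  rcases eq_or_ne y 0 with rfl | hy
  · rw [zero_pow he, pow_eq_zero_iff he] at h
    exact h
  have hx : x ≠ 0 := by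
    intro hx0
    rw [hx0, zero_pow he, eq_comm, pow_eq_zero_iff he] at h
    exact hy h
  have hz : (x / y) ^ q ^ c = 1 := by
    rw [div_pow, h, div_self (pow_ne_zero _ hy)]
  have ho1 : orderOf (x / y) ∣ q ^ c := orderOf_dvd_of_pow_eq_one hz
  have ho2 : orderOf (x / y) ∣ q ^ n - 1 := by
    apply orderOf_dvd_of_pow_eq_one
    rw [← hcard]
    exact FiniteField.pow_card_sub_one_eq_one _ (div_ne_zero hx hy)
  have : orderOf (x / y) ∣ 1 := hcop ▸ Nat.dvd_gcd ho1 ho2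
  have hord : orderOf (x / y) = 1 := Nat.eq_one_of_dvd_one this
  have : x / y = 1 := orderOf_eq_one_iff.mp hord
  field_simp at this
  exact this

lemma aux_mul {M : Type*} [Monoid M] {γ : M} {q x : ℕ} (h : γ ^ q ^ x = γ) :
    ∀ j, γ ^ q ^ (j * x) = γ
  | 0 => by simp
  | j + 1 => by
    rw [add_mul, one_mul, pow_add, pow_mul, aux_mul h j, h]

lemma aux_gcd {q n : ℕ} (hq : 1 < q) (hn : 0 < n) (hcard : Fintype.card F = q ^ n)
    {γ : F} (a b : ℕ) :
    γ ^ q ^ a = γ → γ ^ q ^ b = γ → γ ^ q ^ Nat.gcd a b = γ := by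
  induction a, b using Nat.gcd.induction with
  | H0 b => intro _ hb; simpa using hb
  | H1 a b hpos ih =>
    intro ha hb
    rw [Nat.gcd_rec]
    refine ih ?_ ha
    have hc : γ ^ q ^ (a * (b / a)) = γ := by
      have := aux_mul ha (b / a)
      rwa [Nat.mul_comm] at this
    apply aux_pow_inj hq hn hcard (a * (b / a))
    show (γ ^ q ^ (b % a)) ^ q ^ (a * (b / a)) = γ ^ q ^ (a * (b / a))
    rw [← pow_mul, ← pow_add,
      show b % a + a * (b / a) = b from by
        have := Nat.div_add_mod b a; omega,
      hb, hc]

end Aux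

set_option synthInstance.maxHeartbeats 1000000 in
set_option maxHeartbeats 1000000 in
theorem quasi_shift_eq_implies_ratio_in_subfield
    {K F : Type*} [Field K] [Fintype K] [Field F] [Fintype F] [Algebra K F]
    (q n m k i s : ℕ) (hq : Fintype.card K = q) (hn : 0 < n)
    (hF : Module.finrank K F = n) (hm : 0 < m) (hmdvd : m ∣ q ^ n - 1)
    (V : Submodule K F) (hVk : Module.finrank K ↥V = k) (hik : i < k)
    (a : ℕ → F)
    (hLV : subspacePoly V =
      X ^ q ^ k + ∑ j ∈ Finset.range (i + 1), C (a j) * X ^ q ^ j)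
    (hs1 : 1 ≤ s) (hsi : s ≤ i) (has : a s ≠ 0)
    (α β : F) (hα : α ≠ 0) (hβ : β ≠ 0)
    (heq : qshift (α ^ m) V = qshift (β ^ m) V) :
    ((α / β) ^ m) ^ q ^ Nat.gcd s n = (α / β) ^ m := by
  classical
  have hq2 : 1 < q := hq ▸ Fintype.one_lt_card
  have hFcard : Fintype.card F = q ^ n := by
    rw [← hq, ← hF]; exact Module.card_eq_pow_finrank
  set γ : F := (α / β) ^ m with hγdef
  have hγ0 : γ ≠ 0 := pow_ne_zero _ (div_ne_zero hα hβ)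
  -- Step 1 : γ V = V
  have hshift : Submodule.map (LinearMap.mulLeft K γ) V = V := by
    have hinjB : Function.Injective (LinearMap.mulLeft K (β ^ m)) := fun x y hxy =>
      mul_left_cancel₀ (pow_ne_zero m hβ) hxy
    apply Submodule.map_injective_of_injective hinjB
    rw [← Submodule.map_comp, ← LinearMap.mulLeft_mul,
      show β ^ m * γ = α ^ m by
        rw [hγdef, div_pow]; field_simp]
    exact heq
  -- Step 2 : product over γ·V equals subspace polynomial
  set Vfin : Finset F := (Set.toFinite (V : Set F)).toFinset with hVfinDef
  have hprodDef : subspacePoly V = ∏ v ∈ Vfin, (X - C v) := rfl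
  have hmemVfin : ∀ x : F, x ∈ Vfin ↔ x ∈ V := by
    intro x
    rw [hVfinDef, Set.Finite.mem_toFinset, SetLike.mem_coe]
  have himg : Vfin.image (fun v => γ * v) = Vfin := by
    ext w
    simp only [Finset.mem_image, hmemVfin]
    constructor
    · rintro ⟨v, hv, rfl⟩
      rw [← hshift]
      exact ⟨v, hv, rfl⟩
    · intro hw
      rw [← hshift] at hw
      obtain ⟨v, hv, hvw⟩ := hw
      exact ⟨v, hv, hvw⟩
  have hprod : subspacePoly V = ∏ v ∈ Vfin, (X - C (γ * v)) := by
    conv_lhs => rw [hprodDef, ← himg]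
    exact Finset.prod_image fun x _ y _ h => mul_left_cancel₀ hγ0 h
  -- Step 3 : rescaling identity
  set c : F := γ⁻¹ with hcdef
  have hfac : ∀ v : F, X - C (γ * v) = C γ * ((X - C v).comp (C c * X)) := by
    intro v
    rw [sub_comp, X_comp, C_comp, mul_sub, ← mul_assoc, ← C_mul,
      mul_inv_cancel₀ hγ0, C_1, one_mul, ← C_mul]
  set N : ℕ := Vfin.card with hNdef
  have key : subspacePoly V = C (γ ^ N) * (subspacePoly V).comp (C c * X) := by
    calc subspacePoly V = ∏ v ∈ Vfin, (X - C (γ * v)) := hprod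
      _ = ∏ v ∈ Vfin, (C γ * ((X - C v).comp (C c * X))) :=
          by refine Finset.prod_congr rfl ?_; intro v _; exact hfac v
      _ = C γ ^ N * ∏ v ∈ Vfin, ((X - C v).comp (C c * X)) := by
          rw [Finset.prod_mul_distrib, Finset.prod_const]
      _ = C (γ ^ N) * (subspacePoly V).comp (C c * X) := by
          rw [← C_pow, hprodDef, Polynomial.prod_comp]
  -- Step 4 : coefficient extraction
  have hqmono : StrictMono (fun j : ℕ => q ^ j) := fun _ _ h => Nat.pow_lt_pow_right hq2 h
  have hco : ∀ (b : ℕ → F) (r : ℕ), r < i + 1 →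
      (∑ j ∈ Finset.range (i + 1), C (b j) * X ^ q ^ j).coeff (q ^ r) = b r := by
    intro b r hr
    rw [finset_sum_coeff, Finset.sum_eq_single r]
    · simp [coeff_C_mul, coeff_X_pow]
    · intro j _ hne
      have : q ^ r ≠ q ^ j := hqmono.injective.ne (Ne.symm hne)
      simp [coeff_C_mul, coeff_X_pow, this]
    · intro h; exact absurd (Finset.mem_range.mpr hr) h
  have hcok : ∀ (b : ℕ → F),
      (∑ j ∈ Finset.range (i + 1), C (b j) * X ^ q ^ j).coeff (q ^ k) = 0 := by
    intro b
    rw [finset_sum_coeff]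
    apply Finset.sum_eq_zero
    intro j hj
    have hjk : j ≠ k := by
      have := Finset.mem_range.mp hj; omega
    have : q ^ k ≠ q ^ j := hqmono.injective.ne (Ne.symm hjk)
    simp [coeff_C_mul, coeff_X_pow, this]
  have hsk : q ^ s ≠ q ^ k := hqmono.injective.ne (by omega)
  have hPs : (subspacePoly V).coeff (q ^ s) = a s := by
    rw [hLV, coeff_add, coeff_X_pow, if_neg hsk, hco a s (by omega), zero_add]
  have hPk : (subspacePoly V).coeff (q ^ k) = 1 := by
    rw [hLV, coeff_add, coeff_X_pow, if_pos rfl, hcok a, add_zero]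
  have hcomp : (subspacePoly V).comp (C c * X) =
      C (c ^ q ^ k) * X ^ q ^ k +
        ∑ j ∈ Finset.range (i + 1), C (a j * c ^ q ^ j) * X ^ q ^ j := by
    rw [hLV, add_comp]
    congr 1
    · rw [pow_comp, X_comp, mul_pow, ← C_pow]
    · rw [sum_comp]
      refine Finset.sum_congr rfl fun j _ => ?_
      rw [mul_comp, C_comp, pow_comp, X_comp, mul_pow, ← C_pow, ← mul_assoc, ← C_mul]
  have hRs : (C (γ ^ N) * (subspacePoly V).comp (C c * X)).coeff (q ^ s) =
      γ ^ N * (a s * c ^ q ^ s) := by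
    rw [coeff_C_mul, hcomp, coeff_add, coeff_C_mul, coeff_X_pow, if_neg hsk,
      hco (fun j => a j * c ^ q ^ j) s (by omega), mul_zero, zero_add]
  have hRk : (C (γ ^ N) * (subspacePoly V).comp (C c * X)).coeff (q ^ k) =
      γ ^ N * c ^ q ^ k := by
    rw [coeff_C_mul, hcomp, coeff_add, coeff_C_mul, coeff_X_pow, if_pos rfl,
      hcok (fun j => a j * c ^ q ^ j), add_zero, mul_one]
  have hEk : (1 : F) = γ ^ N * c ^ q ^ k := by
    rw [← hPk, ← hRk]
    exact congrArg (fun p => p.coeff (q ^ k)) key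
  have hEs : a s = γ ^ N * (a s * c ^ q ^ s) := by
    have h0 := congrArg (fun p => p.coeff (q ^ s)) key
    rw [hPs, hRs] at h0
    exact h0
  have hNk : γ ^ N = γ ^ q ^ k := by
    have h1 : γ ^ N * (γ ^ q ^ k)⁻¹ = 1 := by
      rw [← inv_pow, ← hcdef]; exact hEk.symm
    exact (mul_inv_eq_one₀ (pow_ne_zero _ hγ0)).mp h1
  have hNs : γ ^ N = γ ^ q ^ s := by
    have h1 : (γ ^ N * (γ ^ q ^ s)⁻¹) * a s = a s := by
      rw [← inv_pow, ← hcdef]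
      calc γ ^ N * (c ^ q ^ s) * a s = γ ^ N * (a s * c ^ q ^ s) := by ring
        _ = a s := hEs.symm
    have h2 : γ ^ N * (γ ^ q ^ s)⁻¹ = 1 := mul_right_cancel₀ has (by rw [h1, one_mul])
    exact (mul_inv_eq_one₀ (pow_ne_zero _ hγ0)).mp h2
  have hks : γ ^ q ^ k = γ ^ q ^ s := hNk.symm.trans hNs
  -- γ ^ (q ^ (k - s)) = γ
  have hskk : s ≤ k := by omega
  have hkms : γ ^ q ^ (k - s) = γ := by
    apply aux_pow_inj hq2 hn hFcard s
    show (γ ^ q ^ (k - s)) ^ q ^ s = γ ^ q ^ s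
    rw [← pow_mul, ← pow_add, Nat.sub_add_cancel hskk, hks]
  -- The stabilizer subalgebra
  let T : Subalgebra K F :=
    { carrier := {x : F | ∀ v ∈ V, x * v ∈ V}
      mul_mem' := fun {x y} hx hy v hv => by
        rw [mul_assoc]; exact hx _ (hy v hv)
      add_mem' := fun {x y} hx hy v hv => by
        rw [add_mul]; exact V.add_mem (hx v hv) (hy v hv)
      one_mem' := fun v hv => by rwa [one_mul]
      algebraMap_mem' := fun r v hv => by
        rw [← Algebra.smul_def]; exact V.smul_mem r hv }
  have hγT : γ ∈ T := by
    intro v hv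
    rw [← hshift]
    exact ⟨v, hv, rfl⟩
  letI : Fintype T := Fintype.ofFinite T
  letI : Field T := Fintype.fieldOfDomain T
  have hTcard : Fintype.card T = q ^ Module.finrank K ↥T := by
    rw [← hq]; exact Module.card_eq_pow_finrank
  set t1 : ℕ := Module.finrank K ↥T with ht1def
  have hγQ : γ ^ q ^ t1 = γ := by
    have h1 : (⟨γ, hγT⟩ : T) ^ Fintype.card T = ⟨γ, hγT⟩ := FiniteField.pow_card _
    have h2 : γ ^ Fintype.card T = γ := by
      have := congrArg (Subtype.val) h1
      simpa [SubmonoidClass.coe_pow] using this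
    rwa [hTcard] at h2
  -- t1 divides n
  have ht1n : t1 ∣ n := by
    have hTF : Fintype.card F = Fintype.card T ^ Module.finrank ↥T F :=
      Module.card_eq_pow_finrank
    rw [hFcard, hTcard, ← pow_mul] at hTF
    exact ⟨Module.finrank ↥T F, Nat.pow_right_injective hq2 hTF⟩
  -- t1 divides k
  let VT : Submodule ↥T F :=
    { carrier := (V : Set F)
      add_mem' := fun hx hy => V.add_mem hx hy
      zero_mem' := V.zero_mem
      smul_mem' := fun t x hx => by
        have h1 : (t : F) * x ∈ V := t.2 x hx
        simpa [Algebra.smul_def] using h1 }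
  letI : Fintype VT := Fintype.ofFinite VT
  letI : Fintype V := Fintype.ofFinite V
  have hVcard : Fintype.card V = q ^ k := by
    rw [← hq, ← hVk]; exact Module.card_eq_pow_finrank
  have hVTV : Fintype.card VT = Fintype.card V :=
    Fintype.card_congr (Equiv.subtypeEquivRight fun x => Iff.rfl)
  have ht1k : t1 ∣ k := by
    have hVTcard : Fintype.card VT = Fintype.card T ^ Module.finrank ↥T VT :=
      Module.card_eq_pow_finrank
    rw [hVTV, hVcard, hTcard, ← pow_mul] at hVTcard
    exact ⟨Module.finrank ↥T VT, Nat.pow_right_injective hq2 hVTcard⟩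
  -- combine
  have hgcd1 : γ ^ q ^ Nat.gcd (k - s) t1 = γ := aux_gcd hq2 hn hFcard _ _ hkms hγQ
  set e : ℕ := Nat.gcd (k - s) t1 with hedef
  have hes : e ∣ s := by
    have h1 : e ∣ k := (Nat.gcd_dvd_right _ _).trans ht1k
    have h2 : e ∣ k - s := Nat.gcd_dvd_left _ _
    have h3 : e ∣ k - (k - s) := Nat.dvd_sub h1 h2
    rwa [Nat.sub_sub_self hskk] at h3
  have hen : e ∣ n := (Nat.gcd_dvd_right _ _).trans ht1n
  obtain ⟨j, hj⟩ : e ∣ Nat.gcd s n := Nat.dvd_gcd hes hen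
  show γ ^ q ^ Nat.gcd s n = γ
  rw [hj, Nat.mul_comm e j]
  exact aux_mul hgcd1 j
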